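/- arXiv:2011.04721 — 2 statements merged into one kernel-verified Lean document; each statement's English description precedes it below -/
import Mathlib

section
/- Let f : ℝⁿ → ℝ be differentiable and m-strongly convex (m > 0) with minimizer x_* and minimum value f_* = f(x_*). Let ρ ≥ 0, and let 0 < t_min ≤ t_max with t_min < 2/m. Suppose (x_k) and (g_k) satisfy x_{k+1} = x_k − t_k g_k, where ‖g_k − ∇f(x_k)‖ ≤ ρ, t_k ∈ [t_min, t_max], and the approximate Armijo condition f(x_k − t_k g_k) ≤ f(x_k) − (t_k/2)‖g_k‖² holds for every k. Then for all k ≥ 0, f(x_k) − f_* ≤ (1 − m t_min/2)^k (f(x_0) − f_*) + ρ² t_max/(m t_min). -/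
open scoped RealInnerProductSpace

lemma first_order_sc {n : ℕ} (f : EuclideanSpace ℝ (Fin n) → ℝ) (m : ℝ)
    (hdiff : Differentiable ℝ f)
    (hconv : ConvexOn ℝ Set.univ (fun y => f y - m / 2 * ‖y‖ ^ 2))
    (x y : EuclideanSpace ℝ (Fin n)) :
    f x + ⟪gradient f x, y - x⟫ + m / 2 * ‖y - x‖ ^ 2 ≤ f y := by
  set v : EuclideanSpace ℝ (Fin n) := y - x with hv
  set h : EuclideanSpace ℝ (Fin n) → ℝ := fun z => f z - m / 2 * ‖z‖ ^ 2 with hh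
  -- φ s = h (x + s • v), convex on ℝ
  set L : ℝ →ᵃ[ℝ] EuclideanSpace ℝ (Fin n) := AffineMap.lineMap x y with hL
  have hφconv : ConvexOn ℝ Set.univ (h ∘ L) := by
    have := hconv.comp_affineMap L
    simpa using this
  -- derivative of φ at 0
  have hline : HasDerivAt (fun s : ℝ => x + s • v) v 0 := by
    simpa using ((hasDerivAt_id (0:ℝ)).smul_const v).const_add x
  have hf1 : HasDerivAt (fun s : ℝ => f (x + s • v)) ⟪gradient f x, v⟫ 0 := by
    have hgx : HasGradientAt f (gradient f x) x := (hdiff x).hasGradientAt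
    have hfd : HasFDerivAt f ((InnerProductSpace.toDual ℝ _) (gradient f x)) x :=
      hgx
    have hfd' : HasFDerivAt f ((InnerProductSpace.toDual ℝ _) (gradient f x))
        ((fun s : ℝ => x + s • v) 0) := by simpa using hfd
    have := hfd'.comp_hasDerivAt 0 hline
    simpa [InnerProductSpace.toDual_apply_apply, Function.comp_def] using this
  have hnorm : ∀ s : ℝ, m / 2 * ‖x + s • v‖ ^ 2
      = m / 2 * (‖x‖ ^ 2 + 2 * (s * ⟪x, v⟫) + s ^ 2 * ‖v‖ ^ 2) := by
    intro s
    rw [@norm_add_sq_real, real_inner_smul_right, norm_smul]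
    simp only [Real.norm_eq_abs, mul_pow, sq_abs]
    try ring
  have hf2 : HasDerivAt (fun s : ℝ => m / 2 * ‖x + s • v‖ ^ 2) (m * ⟪x, v⟫) 0 := by
    have : HasDerivAt (fun s : ℝ => m / 2 * (‖x‖ ^ 2 + 2 * (s * ⟪x, v⟫) + s ^ 2 * ‖v‖ ^ 2))
        (m / 2 * (2 * ⟪x, v⟫)) 0 := by
      have h1 : HasDerivAt (fun s : ℝ => s * ⟪x, v⟫) ⟪x, v⟫ 0 := by
        simpa using (hasDerivAt_id (0:ℝ)).mul_const (⟪x, v⟫)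
      have h2 : HasDerivAt (fun s : ℝ => s ^ 2 * ‖v‖ ^ 2) 0 0 := by
        simpa using (hasDerivAt_pow 2 (0:ℝ)).mul_const (‖v‖ ^ 2)
      have := (((h1.const_mul 2).const_add (‖x‖ ^ 2)).add h2).const_mul (m / 2)
      simpa using this
    have heq : (fun s : ℝ => m / 2 * ‖x + s • v‖ ^ 2)
        = fun s : ℝ => m / 2 * (‖x‖ ^ 2 + 2 * (s * ⟪x, v⟫) + s ^ 2 * ‖v‖ ^ 2) :=
      funext hnorm
    rw [heq]
    convert this using 1; ring
  have hφ : HasDerivAt (fun s : ℝ => h (x + s • v)) (⟪gradient f x, v⟫ - m * ⟪x, v⟫) 0 :=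
    hf1.sub hf2
  have hLs : ∀ s : ℝ, L s = x + s • v := by
    intro s; simp [hL, AffineMap.lineMap_apply, hv]; module
  have hφ' : HasDerivAt (h ∘ L) (⟪gradient f x, v⟫ - m * ⟪x, v⟫) 0 := by
    have : h ∘ L = fun s : ℝ => h (x + s • v) := by
      funext s; simp [Function.comp, hLs s]
    rw [this]; exact hφ
  have hslope := hφconv.le_slope_of_hasDerivAt (Set.mem_univ 0) (Set.mem_univ 1)
    (by norm_num) hφ'
  have hs01 : slope (h ∘ L) 0 1 = h y - h x := by
    rw [slope_def_field]
    have h0 : L 0 = x := by simp [hLs]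
    have h1 : L 1 = y := by rw [hLs]; simp [hv]
    simp [Function.comp, h0, h1]
  rw [hs01] at hslope
  -- expand
  have e1 : ‖v‖ ^ 2 = ‖y‖ ^ 2 - 2 * ⟪y, x⟫ + ‖x‖ ^ 2 := by
    rw [hv, @norm_sub_sq_real]
  have e2 : ⟪x, v⟫ = ⟪y, x⟫ - ‖x‖ ^ 2 := by
    rw [hv, inner_sub_right, real_inner_self_eq_norm_sq, real_inner_comm]
  simp only [hh] at hslope
  have e3 : m / 2 * ‖v‖ ^ 2 = m / 2 * ‖y‖ ^ 2 - m * ⟪y, x⟫ + m / 2 * ‖x‖ ^ 2 := by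
    rw [e1]; ring
  have e4 : m * ⟪x, v⟫ = m * ⟪y, x⟫ - m * ‖x‖ ^ 2 := by rw [e2]; ring
  linarith

lemma pl_ineq {n : ℕ} (f : EuclideanSpace ℝ (Fin n) → ℝ) (m : ℝ) (hm : 0 < m) (hdiff : Differentiable ℝ f)
    (hconv : ConvexOn ℝ Set.univ (fun y => f y - m / 2 * ‖y‖ ^ 2))
    (xstar : EuclideanSpace ℝ (Fin n)) (hmin : ∀ y, f xstar ≤ f y)
    (z : EuclideanSpace ℝ (Fin n)) :
    2 * m * (f z - f xstar) ≤ ‖gradient f z‖ ^ 2 := by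
  set gr := gradient f z with hgr
  set d := xstar - z with hd
  have h1 := first_order_sc f m hdiff hconv z xstar
  rw [← hd, ← hgr] at h1
  have key : (0:ℝ) ≤ ‖d + (1 / m) • gr‖ ^ 2 := sq_nonneg _
  have hexp : ‖d + (1 / m) • gr‖ ^ 2
      = ‖d‖ ^ 2 + 2 * ((1 / m) * ⟪d, gr⟫) + (1 / m) ^ 2 * ‖gr‖ ^ 2 := by
    rw [@norm_add_sq_real, real_inner_smul_right, norm_smul]
    simp only [Real.norm_eq_abs, mul_pow, sq_abs]
    try ring
  rw [hexp] at key
  have hcomm : ⟪gr, d⟫ = ⟪d, gr⟫ := real_inner_comm _ _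
  have hm' : m ≠ 0 := hm.ne'
  have key2 : 0 ≤ m ^ 2 * ‖d‖ ^ 2 + 2 * m * ⟪d, gr⟫ + ‖gr‖ ^ 2 := by
    have h2 := mul_nonneg (sq_nonneg m) key
    have h3 : m ^ 2 * (‖d‖ ^ 2 + 2 * (1 / m * ⟪d, gr⟫) + (1 / m) ^ 2 * ‖gr‖ ^ 2)
        = m ^ 2 * ‖d‖ ^ 2 + 2 * m * ⟪d, gr⟫ + ‖gr‖ ^ 2 := by
      field_simp
    linarith [h3 ▸ h2]
  nlinarith [key2, h1, hm, mul_pos hm hm]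

/-- Convergence of approximate-gradient descent with approximate Armijo step sizes in
`[t_min, t_max]` and gradient-approximation error at most `ρ`, on an `m`-strongly convex
function: `f(x_k) − f_* ≤ (1 − m t_min/2)^k (f(x_0) − f_*) + ρ² t_max/(m t_min)`. -/
theorem stmt_7 {n : ℕ} (f : EuclideanSpace ℝ (Fin n) → ℝ) (m : ℝ) (hm : 0 < m)
    (hdiff : Differentiable ℝ f)
    (hconv : ConvexOn ℝ Set.univ (fun y => f y - m / 2 * ‖y‖ ^ 2))
    (xstar : EuclideanSpace ℝ (Fin n)) (hmin : ∀ y, f xstar ≤ f y)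
    (ρ : ℝ) (hρ : 0 ≤ ρ)
    (tmin tmax : ℝ) (htmin : 0 < tmin) (htminmax : tmin ≤ tmax)
    (htmin2 : tmin < 2 / m)
    (x : ℕ → EuclideanSpace ℝ (Fin n)) (g : ℕ → EuclideanSpace ℝ (Fin n)) (t : ℕ → ℝ)
    (hg : ∀ k, ‖g k - gradient f (x k)‖ ≤ ρ)
    (ht : ∀ k, t k ∈ Set.Icc tmin tmax)
    (hstep : ∀ k, x (k + 1) = x k - t k • g k)
    (harmijo : ∀ k, f (x k - t k • g k) ≤ f (x k) - t k / 2 * ‖g k‖ ^ 2) :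
    ∀ k : ℕ, f (x k) - f xstar ≤
      (1 - m * tmin / 2) ^ k * (f (x 0) - f xstar) + ρ ^ 2 * tmax / (m * tmin) := by

  have hmt : 0 < m * tmin := mul_pos hm htmin
  have hq0 : 0 ≤ 1 - m * tmin / 2 := by
    have : m * tmin < 2 := by
      rw [lt_div_iff₀ hm] at htmin2; nlinarith
    linarith
  have htmax : 0 < tmax := lt_of_lt_of_le htmin htminmax
  have hC0 : 0 ≤ ρ ^ 2 * tmax / (m * tmin) :=
    div_nonneg (mul_nonneg (sq_nonneg ρ) htmax.le) hmt.le
  have hCeq : (1 - m * tmin / 2) * (ρ ^ 2 * tmax / (m * tmin)) + ρ ^ 2 * tmax / 2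
      = ρ ^ 2 * tmax / (m * tmin) := by
    field_simp
    ring
  -- one-step bound
  have hstepbd : ∀ k, f (x (k + 1)) - f xstar ≤
      (1 - m * tmin / 2) * (f (x k) - f xstar) + ρ ^ 2 * tmax / 2 := by
    intro k
    set gr := gradient f (x k) with hgr
    have he0 : 0 ≤ f (x k) - f xstar := by linarith [hmin (x k)]
    have hpl := pl_ineq f m hm hdiff hconv xstar hmin (x k)
    have hng : ‖gr‖ ≤ ‖g k‖ + ρ := by
      have : gr = g k - (g k - gr) := by abel
      calc ‖gr‖ = ‖g k - (g k - gr)‖ := by rw [← this]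
        _ ≤ ‖g k‖ + ‖g k - gr‖ := norm_sub_le _ _
        _ ≤ ‖g k‖ + ρ := by linarith [hg k]
    have hng2 : ‖gr‖ ^ 2 ≤ 2 * ‖g k‖ ^ 2 + 2 * ρ ^ 2 := by
      nlinarith [sq_nonneg (‖g k‖ - ρ), norm_nonneg gr, norm_nonneg (g k)]
    have harm : f (x (k + 1)) ≤ f (x k) - t k / 2 * ‖g k‖ ^ 2 := by
      rw [hstep k]; exact harmijo k
    obtain ⟨ht1, ht2⟩ := ht k
    have hG : m * (f (x k) - f xstar) - ρ ^ 2 ≤ ‖g k‖ ^ 2 := by linarith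
    nlinarith [mul_nonneg (by linarith : (0:ℝ) ≤ t k)
        (by linarith : (0:ℝ) ≤ ‖g k‖ ^ 2 - (m * (f (x k) - f xstar) - ρ ^ 2)),
      mul_nonneg (by linarith : (0:ℝ) ≤ t k - tmin)
        (mul_nonneg hm.le he0),
      mul_nonneg (by linarith : (0:ℝ) ≤ tmax - t k) (sq_nonneg ρ)]
  intro k
  induction k with
  | zero => simp; linarith
  | succ k ih =>
    have h1 := hstepbd k
    have h2 : (1 - m * tmin / 2) * (f (x k) - f xstar)
        ≤ (1 - m * tmin / 2) * ((1 - m * tmin / 2) ^ k * (f (x 0) - f xstar)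
            + ρ ^ 2 * tmax / (m * tmin)) :=
      mul_le_mul_of_nonneg_left ih hq0
    calc f (x (k + 1)) - f xstar
        ≤ (1 - m * tmin / 2) * (f (x k) - f xstar) + ρ ^ 2 * tmax / 2 := h1
      _ ≤ (1 - m * tmin / 2) * ((1 - m * tmin / 2) ^ k * (f (x 0) - f xstar)
            + ρ ^ 2 * tmax / (m * tmin)) + ρ ^ 2 * tmax / 2 := by linarith
      _ = (1 - m * tmin / 2) ^ (k + 1) * (f (x 0) - f xstar)
            + ((1 - m * tmin / 2) * (ρ ^ 2 * tmax / (m * tmin)) + ρ ^ 2 * tmax / 2) := by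
          ring
      _ = _ := by rw [hCeq]
end

section
/- Let f : ℝⁿ → ℝ be differentiable, m-strongly convex, and have L-Lipschitz gradient with 0 < m ≤ L, with minimizer x_* and minimum value f_* = f(x_*). Let β ∈ (0, 1) and let (x_k) satisfy x_{k+1} = x_k − t_k ∇f(x_k), where t_k ∈ [β² t₊(k), t₊(k)] and t₊(k) is a minimizer of t ↦ f(x_k − t ∇f(x_k)). Then for all k ≥ 0, f(x_k) − f_* ≤ (1 − β²(1 − √(1 − m/L)))^k (f(x_0) − f_*). -/
open scoped RealInnerProductSpace

section Helpers

variable {E : Type*} [NormedAddCommGroup E] [InnerProductSpace ℝ E] [CompleteSpace E]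

lemma sd_hasDerivAt_line (f : E → ℝ) (hdiff : Differentiable ℝ f) (x v : E) (s : ℝ) :
    HasDerivAt (fun s : ℝ => f (x + s • v)) ⟪gradient f (x + s • v), v⟫ s := by
  have h1 : HasDerivAt (fun s : ℝ => x + s • v) v s := by
    simpa using ((hasDerivAt_id s).smul_const v).const_add x
  have h2 : HasFDerivAt f (InnerProductSpace.toDual ℝ E (gradient f (x + s • v))) (x + s • v) :=
    (hdiff (x + s • v)).hasGradientAt
  simpa [Function.comp_def, InnerProductSpace.toDual_apply_apply] using h2.comp_hasDerivAt s h1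

lemma sd_convexOn_normSq (c : ℝ) (hc : 0 ≤ c) :
    ConvexOn ℝ (Set.univ : Set E) (fun y => c * ‖y‖ ^ 2) := by
  refine ⟨convex_univ, fun p _ q _ a b ha hb hab => ?_⟩
  have h1 : ‖a • p + b • q‖ ≤ a * ‖p‖ + b * ‖q‖ := by
    calc ‖a • p + b • q‖ ≤ ‖a • p‖ + ‖b • q‖ := norm_add_le _ _
      _ = a * ‖p‖ + b * ‖q‖ := by
          rw [norm_smul, norm_smul, Real.norm_of_nonneg ha, Real.norm_of_nonneg hb]
  have h2 : ‖a • p + b • q‖ ^ 2 ≤ (a * ‖p‖ + b * ‖q‖) ^ 2 :=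
    pow_le_pow_left₀ (norm_nonneg _) h1 2
  have h3 : (a * ‖p‖ + b * ‖q‖) ^ 2 ≤ a * ‖p‖ ^ 2 + b * ‖q‖ ^ 2 := by
    nlinarith [sq_nonneg (‖p‖ - ‖q‖), mul_nonneg ha hb]
  have h4 : c * ‖a • p + b • q‖ ^ 2 ≤ c * (a * ‖p‖ ^ 2 + b * ‖q‖ ^ 2) :=
    mul_le_mul_of_nonneg_left (h2.trans h3) hc
  simp only [smul_eq_mul]
  nlinarith [h4]

/-- First-order lower bound for an `m`-strongly convex differentiable function. -/
lemma sd_strongconv_lower (f : E → ℝ) (m : ℝ) (hdiff : Differentiable ℝ f)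
    (hconv : ConvexOn ℝ Set.univ (fun y => f y - m / 2 * ‖y‖ ^ 2)) (x y : E) :
    f x + ⟪gradient f x, y - x⟫ + m / 2 * ‖y - x‖ ^ 2 ≤ f y := by
  set w := y - x with hw
  have hxy : x + (1 : ℝ) • w = y := by simp [hw]
  set χ : ℝ → ℝ := fun s => f (x + s • w) - m / 2 * ‖x + s • w‖ ^ 2 with hχ
  -- convexity of χ along the line
  have hχconv : ConvexOn ℝ (Set.univ : Set ℝ) χ := by
    have hA := hconv.comp_affineMap (AffineMap.lineMap x y : ℝ →ᵃ[ℝ] E)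
    have heq : ((fun y => f y - m / 2 * ‖y‖ ^ 2) ∘ (AffineMap.lineMap x y : ℝ →ᵃ[ℝ] E)) = χ := by
      funext s
      simp only [Function.comp, AffineMap.lineMap_apply, hχ, hw]
      congr 2 <;> [skip; skip] <;> rw [vsub_eq_sub, vadd_eq_add] <;> abel_nf
    rw [heq] at hA
    simpa using hA
  -- derivative of χ at 0
  have hnorm : ∀ s : ℝ, ‖x + s • w‖ ^ 2 = ‖x‖ ^ 2 + (s * (2 * ⟪x, w⟫) + s ^ 2 * ‖w‖ ^ 2) := by
    intro s
    rw [norm_add_sq_real, real_inner_smul_right, norm_smul]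
    simp [mul_pow, Real.norm_eq_abs, sq_abs]
    ring
  have hχ' : HasDerivAt χ (⟪gradient f x, w⟫ - m / 2 * (2 * ⟪x, w⟫)) 0 := by
    have hpoly : HasDerivAt
        (fun s : ℝ => m / 2 * (‖x‖ ^ 2 + (s * (2 * ⟪x, w⟫) + s ^ 2 * ‖w‖ ^ 2)))
        (m / 2 * (2 * ⟪x, w⟫)) 0 := by
      have h1 : HasDerivAt (fun s : ℝ => s * (2 * ⟪x, w⟫)) (2 * ⟪x, w⟫) 0 := by
        simpa using (hasDerivAt_id (0:ℝ)).mul_const (2 * ⟪x, w⟫)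
      have h2 : HasDerivAt (fun s : ℝ => s ^ 2 * ‖w‖ ^ 2) 0 0 := by
        simpa using (hasDerivAt_pow 2 (0:ℝ)).mul_const (‖w‖ ^ 2)
      simpa using (((h1.add h2).const_add (‖x‖ ^ 2)).const_mul (m / 2))
    have hline := sd_hasDerivAt_line f hdiff x w 0
    have hline' : HasDerivAt (fun s : ℝ => f (x + s • w)) ⟪gradient f x, w⟫ 0 := by
      simpa using hline
    have hsub := hline'.sub hpoly
    have heq2 : (fun s : ℝ => f (x + s • w)
        - m / 2 * (‖x‖ ^ 2 + (s * (2 * ⟪x, w⟫) + s ^ 2 * ‖w‖ ^ 2))) = χ := by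
      funext s
      simp only [hχ]
      rw [hnorm s]
    rw [← heq2]; exact hsub
  have hslope := hχconv.le_slope_of_hasDerivAt (Set.mem_univ 0) (Set.mem_univ 1) one_pos hχ'
  rw [slope_def_field] at hslope
  have hχ0 : χ 0 = f x - m / 2 * ‖x‖ ^ 2 := by simp [hχ]
  have hχ1 : χ 1 = f y - m / 2 * ‖y‖ ^ 2 := by rw [hχ]; simp only [hxy]
  have hy2 : ‖y‖ ^ 2 = ‖x‖ ^ 2 + (2 * ⟪x, w⟫ + ‖w‖ ^ 2) := by
    conv_lhs => rw [← hxy]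
    simpa using hnorm 1
  have hy3 : m / 2 * ‖y‖ ^ 2 = m / 2 * ‖x‖ ^ 2 + m / 2 * (2 * ⟪x, w⟫) + m / 2 * ‖w‖ ^ 2 := by
    rw [hy2]; ring
  have hsub1 : (1:ℝ) - 0 = 1 := by norm_num
  rw [hsub1, div_one] at hslope
  rw [hχ0, hχ1] at hslope
  linarith [hslope, hy3]

/-- Descent lemma for an `L`-Lipschitz-gradient function. -/
lemma sd_descent (f : E → ℝ) (L : ℝ) (hL : 0 < L) (hdiff : Differentiable ℝ f)
    (hlip : ∀ x y, ‖gradient f x - gradient f y‖ ≤ L * ‖x - y‖) (x v : E) :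
    f (x + v) ≤ f x + ⟪gradient f x, v⟫ + L / 2 * ‖v‖ ^ 2 := by
  set θ : ℝ → ℝ := fun s => f (x + s • v) - s * ⟪gradient f x, v⟫ - L / 2 * s ^ 2 * ‖v‖ ^ 2
    with hθ
  have hθ' : ∀ s : ℝ, HasDerivAt θ
      (⟪gradient f (x + s • v), v⟫ - ⟪gradient f x, v⟫ - L * s * ‖v‖ ^ 2) s := by
    intro s
    have h1 := sd_hasDerivAt_line f hdiff x v s
    have h2 : HasDerivAt (fun s : ℝ => s * ⟪gradient f x, v⟫) ⟪gradient f x, v⟫ s := by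
      simpa using (hasDerivAt_id s).mul_const ⟪gradient f x, v⟫
    have h3 : HasDerivAt (fun s : ℝ => L / 2 * s ^ 2 * ‖v‖ ^ 2) (L * s * ‖v‖ ^ 2) s := by
      have h := ((hasDerivAt_pow 2 s).const_mul (L / 2)).mul_const (‖v‖ ^ 2)
      refine h.congr_deriv ?_
      push_cast
      ring
    exact (h1.sub h2).sub h3
  have hθdiff : Differentiable ℝ θ := fun s => (hθ' s).differentiableAt
  have hanti : AntitoneOn θ (Set.Icc 0 1) := by
    apply antitoneOn_of_deriv_nonpos (convex_Icc 0 1) hθdiff.continuous.continuousOn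
      (hθdiff.differentiableOn)
    intro s hs
    rw [interior_Icc] at hs
    rw [(hθ' s).deriv]
    have hb1 : ⟪gradient f (x + s • v) - gradient f x, v⟫
        ≤ ‖gradient f (x + s • v) - gradient f x‖ * ‖v‖ := real_inner_le_norm _ _
    have hb2 : ‖gradient f (x + s • v) - gradient f x‖ ≤ L * (s * ‖v‖) := by
      have := hlip (x + s • v) x
      simpa [norm_smul, Real.norm_of_nonneg hs.1.le] using this
    have hb3 : ‖gradient f (x + s • v) - gradient f x‖ * ‖v‖ ≤ L * s * ‖v‖ ^ 2 := by
      nlinarith [norm_nonneg v, hb2]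
    rw [inner_sub_left] at hb1
    linarith
  have h01 : θ 1 ≤ θ 0 := hanti (by norm_num) (by norm_num) (by norm_num)
  simp only [hθ, one_smul, one_pow, mul_one, zero_smul, add_zero, zero_mul, sub_zero,
    zero_pow, mul_zero] at h01
  linarith [h01]

end Helpers

set_option maxHeartbeats 1000000 in
/-- Linear convergence of steepest descent with approximately exact line search
(step size in `[β² t₊, t₊]` where `t₊` is the exact line search minimizer), on an
`m`-strongly convex function with `L`-Lipschitz gradient:
`f(x_k) − f_* ≤ (1 − β²(1 − √(1 − m/L)))^k (f(x_0) − f_*)`. -/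
theorem stmt_13 {n : ℕ} (f : EuclideanSpace ℝ (Fin n) → ℝ) (m L : ℝ)
    (hm : 0 < m) (hmL : m ≤ L)
    (hdiff : Differentiable ℝ f)
    (hconv : ConvexOn ℝ Set.univ (fun y => f y - m / 2 * ‖y‖ ^ 2))
    (hlip : ∀ x y, ‖gradient f x - gradient f y‖ ≤ L * ‖x - y‖)
    (xstar : EuclideanSpace ℝ (Fin n)) (hmin : ∀ y, f xstar ≤ f y)
    (β : ℝ) (hβ : β ∈ Set.Ioo (0 : ℝ) 1)
    (x : ℕ → EuclideanSpace ℝ (Fin n)) (t tplus : ℕ → ℝ)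
    (htplus : ∀ k, ∀ s : ℝ,
      f (x k - tplus k • gradient f (x k)) ≤ f (x k - s • gradient f (x k)))
    (ht : ∀ k, t k ∈ Set.Icc (β ^ 2 * tplus k) (tplus k))
    (hstep : ∀ k, x (k + 1) = x k - t k • gradient f (x k)) :
    ∀ k : ℕ, f (x k) - f xstar ≤
      (1 - β ^ 2 * (1 - Real.sqrt (1 - m / L))) ^ k * (f (x 0) - f xstar) := by
  have hL : 0 < L := lt_of_lt_of_le hm hmL
  have hβ2 : 0 < β ^ 2 := pow_pos hβ.1 2
  have hβ21 : β ^ 2 < 1 := by nlinarith [hβ.1, hβ.2]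
  -- per-step contraction with the simpler rate 1 - β² m / L
  have key : ∀ k, f (x (k + 1)) - f xstar
      ≤ (1 - β ^ 2 * (m / L)) * (f (x k) - f xstar) := by
    intro k
    set g := gradient f (x k) with hg
    set D := f (x k) - f xstar with hD
    have hDnn : 0 ≤ D := by have := hmin (x k); linarith
    -- PL inequality
    have hlb := sd_strongconv_lower f m hdiff hconv (x k) xstar
    have hPL : 2 * m * D ≤ ‖g‖ ^ 2 := by
      have hip : -(‖g‖ * ‖xstar - x k‖) ≤ ⟪g, xstar - x k⟫ := by
        have := abs_real_inner_le_norm g (xstar - x k)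
        cases abs_le.mp this with
        | intro h1 h2 => linarith
      nlinarith [hlb, hip, sq_nonneg (m * ‖xstar - x k‖ - ‖g‖), hm,
        norm_nonneg (xstar - x k)]
    -- descent step at 1/L
    have hdesc : f (x k - (1 / L) • g) ≤ f (x k) - ‖g‖ ^ 2 / (2 * L) := by
      have h := sd_descent f L hL hdiff hlip (x k) (-((1 / L) • g))
      have he1 : x k + -((1 / L) • g) = x k - (1 / L) • g := by abel
      have he2 : ⟪g, -((1 / L) • g)⟫ = -(1 / L) * ‖g‖ ^ 2 := by
        rw [inner_neg_right, real_inner_smul_right, real_inner_self_eq_norm_sq]; ring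
      have he3 : ‖-((1 / L) • g)‖ ^ 2 = (1 / L) ^ 2 * ‖g‖ ^ 2 := by
        rw [norm_neg, norm_smul, mul_pow, Real.norm_eq_abs, sq_abs]
      rw [he1, he2, he3] at h
      have : f (x k) + -(1 / L) * ‖g‖ ^ 2 + L / 2 * ((1 / L) ^ 2 * ‖g‖ ^ 2)
          = f (x k) - ‖g‖ ^ 2 / (2 * L) := by field_simp; ring
      linarith [h, this.le, this.ge]
    have hplus : f (x k - tplus k • g) ≤ f (x k) - ‖g‖ ^ 2 / (2 * L) :=
      (htplus k (1 / L)).trans hdesc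
    -- convexity of f and of φ along the search line
    have hf_conv : ConvexOn ℝ Set.univ f := by
      have hsum := hconv.add (sd_convexOn_normSq (m / 2) (by positivity))
      have : ((fun y => f y - m / 2 * ‖y‖ ^ 2) + fun y => m / 2 * ‖y‖ ^ 2) = f := by
        funext y; simp
      rwa [this] at hsum
    have hφ : ConvexOn ℝ (Set.univ : Set ℝ) (fun s : ℝ => f (x k - s • g)) := by
      have hA := hf_conv.comp_affineMap (AffineMap.lineMap (x k) (x k - g) : ℝ →ᵃ[ℝ] _)
      have heq : (f ∘ (AffineMap.lineMap (x k) (x k - g) : ℝ →ᵃ[ℝ] _))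
          = fun s : ℝ => f (x k - s • g) := by
        funext s
        simp only [Function.comp, AffineMap.lineMap_apply, vsub_eq_sub, vadd_eq_add]
        congr 1
        have : x k - g - x k = -g := by abel
        rw [this, smul_neg]
        abel
      rw [heq] at hA
      simpa using hA
    obtain ⟨ht1, ht2⟩ := ht k
    -- f(x_{k+1}) ≤ φ(β² t₊)
    have h5 : f (x k - t k • g) ≤ f (x k - (β ^ 2 * tplus k) • g) := by
      have hseg : t k ∈ segment ℝ (β ^ 2 * tplus k) (tplus k) := by
        rw [segment_eq_Icc (ht1.trans ht2)]
        exact ⟨ht1, ht2⟩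
      have hmax := hφ.le_on_segment (Set.mem_univ (β ^ 2 * tplus k))
        (Set.mem_univ (tplus k)) hseg
      have hend : f (x k - tplus k • g) ≤ f (x k - (β ^ 2 * tplus k) • g) :=
        htplus k (β ^ 2 * tplus k)
      calc f (x k - t k • g) ≤ max (f (x k - (β ^ 2 * tplus k) • g))
            (f (x k - tplus k • g)) := hmax
        _ = f (x k - (β ^ 2 * tplus k) • g) := max_eq_left hend
    -- φ(β² t₊) ≤ (1-β²) φ(0) + β² φ(t₊)
    have h6 : f (x k - (β ^ 2 * tplus k) • g)
        ≤ (1 - β ^ 2) * f (x k) + β ^ 2 * f (x k - tplus k • g) := by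
      have hc := hφ.2 (Set.mem_univ (0 : ℝ)) (Set.mem_univ (tplus k))
        (show (0:ℝ) ≤ 1 - β ^ 2 by linarith) (le_of_lt hβ2) (by ring)
      simpa [smul_eq_mul] using hc
    -- combine
    have hgd : 2 * m * D / (2 * L) ≤ ‖g‖ ^ 2 / (2 * L) :=
      (div_le_div_iff_of_pos_right (by linarith)).mpr hPL
    have hfinal : f (x (k + 1)) - f xstar ≤ D - β ^ 2 * (‖g‖ ^ 2 / (2 * L)) := by
      rw [hstep k]
      nlinarith [h5, h6, hplus, hβ2]
    have hfinal2 : D - β ^ 2 * (‖g‖ ^ 2 / (2 * L)) ≤ D - β ^ 2 * (2 * m * D / (2 * L)) := by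
      nlinarith [hgd, hβ2.le]
    have heq : D - β ^ 2 * (2 * m * D / (2 * L)) = (1 - β ^ 2 * (m / L)) * D := by
      field_simp
    linarith
  have hml1 : m / L ≤ 1 := (div_le_one hL).mpr hmL
  have hml0 : 0 ≤ 1 - m / L := by linarith
  set C := Real.sqrt (1 - m / L) with hC
  have hC0 : 0 ≤ C := Real.sqrt_nonneg _
  have hCge : 1 - m / L ≤ C := by
    have hmlnn : 0 ≤ m / L := div_nonneg hm.le hL.le
    have h1 : (1 - m / L) ^ 2 ≤ 1 - m / L := by nlinarith [hml0, hmlnn]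
    have h2 := Real.sqrt_le_sqrt h1
    rwa [Real.sqrt_sq hml0] at h2
  have hρρ' : 1 - β ^ 2 * (m / L) ≤ 1 - β ^ 2 * (1 - C) := by
    have h : 1 - C ≤ m / L := by linarith
    nlinarith [hβ2.le]
  have hρ'0 : 0 ≤ 1 - β ^ 2 * (1 - C) := by
    nlinarith [mul_nonneg hβ2.le hC0, hβ21]
  intro k
  induction k with
  | zero => simp
  | succ k ih =>
    have hDk : 0 ≤ f (x k) - f xstar := by linarith [hmin (x k)]
    calc f (x (k + 1)) - f xstar
        ≤ (1 - β ^ 2 * (m / L)) * (f (x k) - f xstar) := key k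
      _ ≤ (1 - β ^ 2 * (1 - C)) * (f (x k) - f xstar) :=
          mul_le_mul_of_nonneg_right hρρ' hDk
      _ ≤ (1 - β ^ 2 * (1 - C)) * ((1 - β ^ 2 * (1 - C)) ^ k * (f (x 0) - f xstar)) :=
          mul_le_mul_of_nonneg_left ih hρ'0
      _ = (1 - β ^ 2 * (1 - C)) ^ (k + 1) * (f (x 0) - f xstar) := by ring
end
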